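/- arXiv:0905.0342 — 4 statements merged into one kernel-verified Lean document; each statement's English description precedes it below -/
import Mathlib

section
/- Let f be a nonzero homogeneous polynomial of degree d in F_q[x_0,...,x_n] with d < n+1. If f has a nontrivial zero, then the number of projective points in P^n(F_q) at which f vanishes is at least 1 + q + q^2 + ... + q^(n-d). -/
open MvPolynomial

-- eval of smul for homogeneous polynomials
lemma aux_eval_smul {F : Type} [CommSemiring F] {m d : ℕ} {f : MvPolynomial (Fin m) F}
    (hf : f.IsHomogeneous d) (c : F) (v : Fin m → F) :
    eval (c • v) f = c ^ d * eval v f := by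
  rw [eval_eq', eval_eq', Finset.mul_sum]
  apply Finset.sum_congr rfl
  intro e he
  have hdeg : ∑ i, e i = d := by
    have h1 := hf (MvPolynomial.mem_support_iff.mp he)
    rw [Finsupp.weight_apply] at h1
    rw [← h1]
    rw [Finsupp.sum]
    rw [Finset.sum_subset (Finset.subset_univ e.support)]
    · simp
    · intro x _ hx
      simp [Finsupp.notMem_support_iff.mp hx]
  have : ∏ i, (c • v) i ^ e i = c ^ d * ∏ i, v i ^ e i := by
    simp only [Pi.smul_apply, smul_eq_mul, mul_pow, Finset.prod_mul_distrib]
    rw [Finset.prod_pow_eq_pow_sum, hdeg]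
  rw [this]; ring

open MvPolynomial Module

lemma aux_chevalley (F : Type) [Field F] [Fintype F] {m d : ℕ} (f : MvPolynomial (Fin m) F)
    (hf : f.IsHomogeneous d) (hd1 : 1 ≤ d) (W : Submodule F (Fin m → F))
    (hW : d + 1 ≤ finrank F W) :
    ∃ v ∈ W, v ≠ 0 ∧ eval v f = 0 := by
  classical
  set k := finrank F W with hk
  let b : Basis (Fin k) F W := Module.finBasis F W
  let s : Fin m → MvPolynomial (Fin k) F := fun i => ∑ j, C ((b j : Fin m → F) i) * X j
  let g : MvPolynomial (Fin k) F := aeval s f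
  have hs : ∀ i, (s i).IsHomogeneous 1 := by
    intro i
    apply IsHomogeneous.sum
    intro j _
    simpa using MvPolynomial.isHomogeneous_C_mul_X_pow ((b j : Fin m → F) i) j 1
  have hg : g.IsHomogeneous d := by simpa [g, aeval_eq_bind₁] using hf.aeval s hs
  -- evaluation identity
  have heval : ∀ y : Fin k → F, eval y g = eval (fun i => ∑ j, (b j : Fin m → F) i * y j) f := by
    intro y
    show eval y (aeval s f) = _
    rw [aeval_def, eval₂_comp_left (eval y) (algebraMap F (MvPolynomial (Fin k) F)) s f,
      ← eval₂_id, ← coe_eval₂Hom, ← coe_eval₂Hom]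
    apply eval₂Hom_congr ?_ ?_ rfl
    · ext r
      simp
    · funext i
      simp [s]
    
  have h0 : eval (0 : Fin k → F) g = 0 := by
    rw [heval 0]
    simp only [Pi.zero_apply, mul_zero, Finset.sum_const_zero]
    rw [eval_zero']
    have := hf.coeff_eq_zero (d := 0) (by rw [map_zero]; omega)
    rw [show (constantCoeff f) = coeff 0 f from congrFun constantCoeff_eq f]
    exact this
  -- Chevalley
  obtain ⟨p, hpc⟩ := CharP.exists F
  haveI : CharP F p := hpc
  haveI hpp : Fact p.Prime := ⟨CharP.char_is_prime F p⟩
  have hdvd : p ∣ Fintype.card {x : Fin k → F // eval x g = 0} := by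
    apply char_dvd_card_solutions p
    calc g.totalDegree ≤ d := hg.totalDegree_le
    _ < Fintype.card (Fin k) := by simp; omega
  have hcard1 : 1 ≤ Fintype.card {x : Fin k → F // eval x g = 0} :=
    Fintype.card_pos_iff.mpr ⟨⟨0, h0⟩⟩
  have hcard : 1 < Fintype.card {x : Fin k → F // eval x g = 0} := by
    rcases Nat.lt_or_ge 1 (Fintype.card {x : Fin k → F // eval x g = 0}) with h|h
    · exact h
    · exfalso
      interval_cases h' : (Fintype.card {x : Fin k → F // eval x g = 0}) <;>
        simp_all [Nat.dvd_one, hpp.out.ne_one]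
  obtain ⟨y, hy⟩ := Fintype.exists_ne_of_one_lt_card hcard ⟨0, h0⟩
  have hy0 : (y : Fin k → F) ≠ 0 := fun h => hy (Subtype.ext h)
  refine ⟨fun i => ∑ j, (b j : Fin m → F) i * (y : Fin k → F) j, ?_, ?_, ?_⟩
  · have : (fun i => ∑ j, (b j : Fin m → F) i * (y : Fin k → F) j)
        = ((∑ j, (y : Fin k → F) j • b j : W) : Fin m → F) := by
      push_cast
      funext i
      simp [mul_comm]
    rw [this]
    exact (∑ j, (y : Fin k → F) j • b j : W).2
  · intro hv
    apply hy0
    have hz : (∑ j, (y : Fin k → F) j • b j : W) = 0 := by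
      apply Subtype.ext
      push_cast
      rw [← hv]
      funext i
      simp [mul_comm]
    have := linearIndependent_iff'.mp b.linearIndependent Finset.univ
      (fun j => (y : Fin k → F) j) hz
    funext j
    exact this j (Finset.mem_univ j)
  · rw [← heval]
    exact y.2

open MvPolynomial Module

set_option synthInstance.maxHeartbeats 1000000 in
set_option maxHeartbeats 1000000 in
lemma aux_cone_card (F : Type) [Field F] [Fintype F] (c : ℕ) :
    ∀ m, ∀ C : Set (Fin m → F), c < m → (0 : Fin m → F) ∈ C →
      (∀ (a : F), ∀ v ∈ C, a • v ∈ C) →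
      (∀ W : Submodule F (Fin m → F), m - c ≤ Module.finrank F W →
        ∃ v ∈ W, v ≠ 0 ∧ v ∈ C) →
      Fintype.card F ^ (c + 1) ≤ Nat.card C := by
  intro m
  induction m with
  | zero => intro C hcm; omega
  | succ m ih =>
    intro C hcm h0 hcone hblock
    have huniv_card : Nat.card (Set.univ : Set (Fin (m+1) → F)) = Fintype.card F ^ (m+1) := by
      rw [Nat.card_coe_set_eq, Set.ncard_univ, Nat.card_eq_fintype_card,
        Fintype.card_fun]
      simp
    rcases eq_or_ne c m with rfl | hcm'
    · -- base case : C = univ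
      have hC : C = Set.univ := by
        ext v
        simp only [Set.mem_univ, iff_true]
        rcases eq_or_ne v 0 with rfl | hv
        · exact h0
        · obtain ⟨w, hwW, hw0, hwC⟩ := hblock (Submodule.span F {v})
            (by rw [finrank_span_singleton hv]; omega)
          obtain ⟨a, rfl⟩ := Submodule.mem_span_singleton.mp hwW
          have ha : a ≠ 0 := by rintro rfl; simp at hw0
          have := hcone a⁻¹ _ hwC
          rwa [smul_smul, inv_mul_cancel₀ ha, one_smul] at this
      rw [hC, huniv_card]
    · have hcm2 : c < m := by omega
      by_cases huniv : ∀ v, v ∈ C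
      · have hC : C = Set.univ := Set.eq_univ_of_forall huniv
        rw [hC, huniv_card]
        exact Nat.pow_le_pow_right (Fintype.card_pos) (by omega)
      · push_neg at huniv
        obtain ⟨u, hu⟩ := huniv
        have hu0 : u ≠ 0 := fun h => hu (h ▸ h0)
        -- projection with kernel span u
        have hq : finrank F ((Fin (m+1) → F) ⧸ Submodule.span F {u}) = m := by
          have h1 := Submodule.finrank_quotient_add_finrank (Submodule.span F {u})
          rw [finrank_span_singleton hu0] at h1
          have h2 : finrank F (Fin (m+1) → F) = m + 1 := Module.finrank_fin_fun F
          omega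
        have e : ((Fin (m+1) → F) ⧸ Submodule.span F {u}) ≃ₗ[F] (Fin m → F) :=
          LinearEquiv.ofFinrankEq _ _ (by rw [hq, Module.finrank_fin_fun])
        set π : (Fin (m+1) → F) →ₗ[F] (Fin m → F) :=
          e.toLinearMap ∘ₗ (Submodule.span F {u}).mkQ with hπ
        have hker : LinearMap.ker π = Submodule.span F {u} := by
          rw [hπ, LinearMap.ker_comp, LinearEquiv.ker, Submodule.comap_bot,
            Submodule.ker_mkQ]
        have hsurj : Function.Surjective π := by
          rw [hπ]
          exact e.surjective.comp (Submodule.mkQ_surjective _)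
        have hC2 : ∀ v ∈ C, v ≠ 0 → π v ≠ 0 := by
          intro v hv hv0 hπv
          rw [← LinearMap.mem_ker, hker, Submodule.mem_span_singleton] at hπv
          obtain ⟨a, rfl⟩ := hπv
          have ha : a ≠ 0 := by rintro rfl; simp at hv0
          have := hcone a⁻¹ _ hv
          rw [smul_smul, inv_mul_cancel₀ ha, one_smul] at this
          exact hu this
        have key := ih (π '' C) hcm2 ⟨0, h0, map_zero π⟩
          (by
            rintro a v ⟨w, hw, rfl⟩
            exact ⟨a • w, hcone a w hw, map_smul π a w⟩)
          (by
            intro W' hW'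
            -- preimage has finrank ≥ m + 1 - c
            set U := Submodule.comap π W' with hU
            have hrankU : m + 1 - c ≤ finrank F U := by
              have hrn := LinearMap.finrank_range_add_finrank_ker (π ∘ₗ U.subtype)
              have hrange : LinearMap.range (π ∘ₗ U.subtype) = W' := by
                rw [LinearMap.range_comp, Submodule.range_subtype, hU,
                  Submodule.map_comap_eq, LinearMap.range_eq_top.mpr hsurj, top_inf_eq]
              have hkerc : LinearMap.ker (π ∘ₗ U.subtype) =
                  Submodule.comap U.subtype (Submodule.span F {u}) := by
                rw [LinearMap.ker_comp, hker]
              have hle : Submodule.span F {u} ≤ U := by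
                rw [hU, ← hker]
                exact fun x hx => by
                  simp only [Submodule.mem_comap, LinearMap.mem_ker.mp hx,
                    Submodule.zero_mem]
              have hkf : finrank F (LinearMap.ker (π ∘ₗ U.subtype)) = 1 := by
                rw [hkerc, (Submodule.comapSubtypeEquivOfLe hle).finrank_eq,
                  finrank_span_singleton hu0]
              rw [hrange, hkf] at hrn
              omega
            obtain ⟨v, hvU, hv0, hvC⟩ := hblock U hrankU
            exact ⟨π v, hvU, hC2 v hvC hv0, ⟨v, hvC, rfl⟩⟩)
        refine key.trans ?_
        rw [Nat.card_coe_set_eq, Nat.card_coe_set_eq]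
        exact Set.ncard_image_le (Set.toFinite C)

open MvPolynomial Module

theorem stmt_0 (F : Type) [Field F] [Fintype F] (n d : ℕ) (hd : d < n + 1)
    (f : MvPolynomial (Fin (n + 1)) F) (hf0 : f ≠ 0) (hf : f.IsHomogeneous d)
    (hzero : ∃ v : Fin (n + 1) → F, v ≠ 0 ∧ eval v f = 0) :
    ∑ i ∈ Finset.range (n - d + 1), (Fintype.card F) ^ i ≤
      Nat.card {p : Projectivization F (Fin (n + 1) → F) |
        ∃ (v : Fin (n + 1) → F) (hv : v ≠ 0),
          Projectivization.mk F v hv = p ∧ eval v f = 0} := by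
  classical
  set q := Fintype.card F with hq
  have hq2 : 2 ≤ q := Fintype.one_lt_card
  -- d ≥ 1
  have hd1 : 1 ≤ d := by
    by_contra h
    push_neg at h
    interval_cases d
    obtain ⟨v, hv, hev⟩ := hzero
    obtain ⟨e, he⟩ := exists_coeff_ne_zero hf0
    have he0 : e = 0 := by
      have h1 := hf he
      rw [Pi.one_def, ← Finsupp.degree_eq_weight_one] at h1
      exact (Finsupp.degree_eq_zero_iff e).mp h1
    subst he0
    have h2 : eval ((0:F) • v) f = (0:F) ^ 0 * eval v f := aux_eval_smul hf 0 v
    rw [zero_smul, pow_zero, one_mul, hev, eval_zero] at h2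
    apply he
    rwa [show (constantCoeff f) = coeff 0 f from congrFun constantCoeff_eq f] at h2
  -- the affine cone
  set C : Set (Fin (n+1) → F) := {v | eval v f = 0} with hC
  have h0C : (0 : Fin (n+1) → F) ∈ C := by
    have h2 : eval ((0:F) • (0 : Fin (n+1) → F)) f = (0:F) ^ d * eval 0 f :=
      aux_eval_smul hf 0 0
    rw [zero_smul] at h2
    rw [hC, Set.mem_setOf_eq, h2, zero_pow (by omega), zero_mul]
  have hcone : ∀ (a : F), ∀ v ∈ C, a • v ∈ C := by
    intro a v hv
    have h2 : eval (a • v) f = a ^ d * eval v f := aux_eval_smul hf a v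
    rw [hC, Set.mem_setOf_eq] at hv ⊢
    rw [h2, hv, mul_zero]
  have hblock : ∀ W : Submodule F (Fin (n+1) → F),
      (n + 1) - (n - d) ≤ finrank F W → ∃ v ∈ W, v ≠ 0 ∧ v ∈ C := by
    intro W hW
    have hW' : d + 1 ≤ finrank F W := by omega
    obtain ⟨v, hvW, hv0, hvf⟩ := aux_chevalley F f hf hd1 W hW'
    exact ⟨v, hvW, hv0, hvf⟩
  have hcard := aux_cone_card F (n - d) (n + 1) C (by omega) h0C hcone hblock
  -- relate to projective count
  set S : Set (Projectivization F (Fin (n + 1) → F)) :=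
    {p | ∃ (v : Fin (n + 1) → F) (hv : v ≠ 0),
          Projectivization.mk F v hv = p ∧ eval v f = 0} with hS
  haveI : Finite (Projectivization F (Fin (n + 1) → F)) := Quotient.finite _
  -- injection from C \ {0} into S × Fˣ
  have hinj : Nat.card ↥(C \ {0} : Set (Fin (n+1) → F)) ≤ Nat.card (↥S × Fˣ) := by
    have hne : ∀ x : ↥(C \ {0} : Set (Fin (n+1) → F)), (x : Fin (n+1) → F) ≠ 0 :=
      fun x => by have := x.2.2; simpa using this
    have hmem : ∀ x : ↥(C \ {0} : Set (Fin (n+1) → F)),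
        Projectivization.mk F (x : Fin (n+1) → F) (hne x) ∈ S := by
      intro x
      exact ⟨x, hne x, rfl, x.2.1⟩
    have hrep : ∀ x : ↥(C \ {0} : Set (Fin (n+1) → F)),
        ∃ a : Fˣ, a • (Projectivization.mk F (x : Fin (n+1) → F) (hne x)).rep
          = (x : Fin (n+1) → F) := by
      intro x
      exact (Projectivization.mk_eq_mk_iff F _ _ (hne x)
        (Projectivization.rep_nonzero _)).mp (Projectivization.mk_rep _).symm
    apply Nat.card_le_card_of_injective
      (fun x => (⟨Projectivization.mk F (x : Fin (n+1) → F) (hne x), hmem x⟩, (hrep x).choose))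
    intro x y hxy
    have h1 : Projectivization.mk F (x : Fin (n+1) → F) (hne x)
        = Projectivization.mk F (y : Fin (n+1) → F) (hne y) :=
      congrArg Subtype.val (congrArg Prod.fst hxy)
    have h2 : (hrep x).choose = (hrep y).choose := congrArg Prod.snd hxy
    have hx := (hrep x).choose_spec
    have hy := (hrep y).choose_spec
    have hmid : (hrep x).choose • (Projectivization.mk F (x : Fin (n+1) → F) (hne x)).rep
        = (hrep y).choose • (Projectivization.mk F (y : Fin (n+1) → F) (hne y)).rep :=
      congrArg₂ (fun (a : Fˣ) (r : Fin (n+1) → F) => a • r) h2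
        (congrArg Projectivization.rep h1)
    exact Subtype.ext (hx.symm.trans (hmid.trans hy))
  have hcount : Nat.card ↥C ≤ Nat.card ↥S * (q - 1) + 1 := by
    have hsub : C ⊆ insert 0 (C \ {0}) := by
      intro v hv
      rcases eq_or_ne v 0 with rfl | hv0
      · exact Set.mem_insert _ _
      · exact Set.mem_insert_of_mem _ ⟨hv, hv0⟩
    have h1 : Nat.card ↥C ≤ Nat.card ↥(C \ {0} : Set (Fin (n+1) → F)) + 1 := by
      rw [Nat.card_coe_set_eq, Nat.card_coe_set_eq]
      calc C.ncard ≤ (insert 0 (C \ {0})).ncard := Set.ncard_le_ncard hsub (Set.toFinite _)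
        _ ≤ (C \ {0}).ncard + 1 := Set.ncard_insert_le _ _
    have h2 : Nat.card (↥S × Fˣ) = Nat.card ↥S * (q - 1) := by
      have hcf : Nat.card F = q := Nat.card_eq_fintype_card
      rw [Nat.card_prod, Nat.card_units, hcf]
    omega
  -- geometric sum identity over ℤ
  have hgeom : ((∑ i ∈ Finset.range (n - d + 1), q ^ i : ℕ) : ℤ) * ((q : ℤ) - 1)
      = (q : ℤ) ^ (n - d + 1) - 1 := by
    push_cast
    exact geom_sum_mul (q : ℤ) (n - d + 1)
  have hineq : ((q : ℤ)) ^ (n - d + 1) ≤ (Nat.card ↥S : ℤ) * ((q : ℤ) - 1) + 1 := by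
    have := hcard.trans hcount
    have hcast : ((q ^ (n - d + 1) : ℕ) : ℤ) ≤ ((Nat.card ↥S * (q - 1) + 1 : ℕ) : ℤ) := by
      exact_mod_cast this
    push_cast [Nat.cast_sub (by omega : 1 ≤ q)] at hcast
    convert hcast using 2 <;> push_cast <;> ring
  have hfinal : ((∑ i ∈ Finset.range (n - d + 1), q ^ i : ℕ) : ℤ) ≤ (Nat.card ↥S : ℤ) := by
    have hpos : (0 : ℤ) < (q : ℤ) - 1 := by
      have : (2 : ℤ) ≤ (q : ℤ) := by exact_mod_cast hq2
      omega
    have := hgeom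
    nlinarith [hineq, hgeom]
  exact_mod_cast hfinal
end

section
/- Let X ⊆ P^n(F_q) with |X| = q + q^2 + ... + q^n. Then the minimal degree of a homogeneous polynomial over F_q nonvanishing on X equals exactly n. -/
section CardProj
open MvPolynomial Finset

lemma aux_card_proj (F : Type) [Field F] [Fintype F] (n : ℕ) :
    (Fintype.card F - 1) * Nat.card (Projectivization F (Fin (n + 1) → F)) =
      Fintype.card F ^ (n + 1) - 1 := by
  classical
  set V := (Fin (n + 1) → F) with hVdef
  set P := Projectivization F V with hPdef
  haveI : Finite P := Quotient.finite _
  haveI : Fintype P := Fintype.ofFinite P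
  set S := { v : V // v ≠ 0 } with hSdef
  have hV : Fintype.card V = Fintype.card F ^ (n + 1) := by
    simp [hVdef]
  have e1 : Fintype.card S = Fintype.card F ^ (n + 1) - 1 := by
    have := Fintype.card_subtype_compl (fun v : V => v = 0)
    rw [Fintype.card_subtype_eq, hV] at this
    exact this
  have e2 : Fintype.card S = Nat.card P * (Fintype.card F - 1) := by
    have e := Equiv.sigmaFiberEquiv (fun u : S => Projectivization.mk' F u)
    have hfib : ∀ p : P, Fintype.card { u : S // Projectivization.mk' F u = p }
        = Fintype.card F - 1 := by
      intro p
      induction p using Projectivization.ind with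
      | h v hv =>
        rw [← Fintype.card_units]
        have hne : ∀ a : Fˣ, a • v ≠ 0 := fun a => by
          rw [Units.smul_def]; exact smul_ne_zero a.ne_zero hv
        have hmk : ∀ a : Fˣ, Projectivization.mk' F (⟨a • v, hne a⟩ : S)
            = Projectivization.mk F v hv := fun a => by
          rw [Projectivization.mk'_eq_mk, Projectivization.mk_eq_mk_iff]
          exact ⟨a, rfl⟩
        apply Fintype.card_congr
        refine (Equiv.ofBijective (fun a => ⟨⟨a • v, hne a⟩, hmk a⟩) ⟨?_, ?_⟩).symm
        · intro a b hab
          have h2 : (a : F) • v = (b : F) • v := by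
            have := congrArg (fun z => ((z : { u : S // Projectivization.mk' F u
              = Projectivization.mk F v hv }) : S).1) hab
            simpa [Units.smul_def] using this
          exact Units.ext (smul_left_injective F hv h2)
        · rintro ⟨⟨u, hu⟩, h⟩
          rw [Projectivization.mk'_eq_mk, Projectivization.mk_eq_mk_iff] at h
          obtain ⟨a, ha⟩ := h
          refine ⟨a, ?_⟩
          apply Subtype.ext; apply Subtype.ext
          simpa using ha
    have hsum : ∑ p : P, Fintype.card { u : S // Projectivization.mk' F u = p }
        = Nat.card P * (Fintype.card F - 1) := by
      rw [Finset.sum_congr rfl (fun p _ => hfib p), Finset.sum_const, Finset.card_univ,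
        smul_eq_mul, Nat.card_eq_fintype_card]
    rw [← Fintype.card_congr e, Fintype.card_sigma, hsum]
  rw [Nat.card_eq_fintype_card] at e2 ⊢
  rw [mul_comm, ← e2, e1]

end CardProj

section Ext
open Polynomial

lemma aux_finrank_splitting (F : Type) [Field F] [Fintype F] (n : ℕ) (hn : n ≠ 0) :
    Module.finrank F
      (SplittingField (X ^ (Fintype.card F ^ n) - X : F[X])) = n := by
  classical
  set q := Fintype.card F with hq
  have hq1 : 1 < q := Fintype.one_lt_card
  set g : F[X] := X ^ (q ^ n) - X with hg
  set K := SplittingField g with hK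
  obtain ⟨p, hp⟩ := CharP.exists F
  haveI : CharP F p := hp
  haveI hpp : Fact p.Prime := ⟨(CharP.char_is_prime F p)⟩
  obtain ⟨k, hk⟩ := FiniteField.card F p
  haveI : CharP K p := charP_of_injective_algebraMap (algebraMap F K).injective p
  have hgsep : g.Separable := by
    apply galois_poly_separable p (q ^ n)
    rw [hq, hk.2]; exact dvd_pow (dvd_pow_self p k.ne_zero) hn
  have hgne : g ≠ 0 := FiniteField.X_pow_card_pow_sub_X_ne_zero F hn hq1
  have hdeg : g.natDegree = q ^ n := FiniteField.X_pow_card_pow_sub_X_natDegree_eq F hn hq1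
  have hcardroot : Fintype.card (g.rootSet K) = q ^ n := by
    rw [Polynomial.card_rootSet_eq_natDegree hgsep (SplittingField.splits g), hdeg]
  -- the set of elements fixed by x ↦ x ^ q ^ n is a subalgebra
  have hqn : q ^ n = p ^ (k * n) := by rw [hq, hk.2, ← pow_mul]
  have hzero : (0 : K) ^ q ^ n = 0 := zero_pow (by positivity)
  set S : Subalgebra F K :=
    { carrier := { x : K | x ^ (q ^ n) = x }
      mul_mem' := fun {a b} ha hb => by simp only [Set.mem_setOf_eq] at *; rw [mul_pow, ha, hb]
      one_mem' := by simp
      add_mem' := fun {a b} ha hb => by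
        simp only [Set.mem_setOf_eq] at *
        rw [hqn] at ha hb ⊢
        rw [add_pow_char_pow, ha, hb]
      zero_mem' := by simp only [Set.mem_setOf_eq]; exact hzero
      algebraMap_mem' := fun r => by
        simp only [Set.mem_setOf_eq]
        rw [← map_pow, FiniteField.pow_card_pow] } with hS
  have hroot_sub : g.rootSet K ⊆ (S : Set K) := by
    intro x hx
    rw [Polynomial.mem_rootSet_of_ne hgne] at hx
    simp only [hg, map_sub, map_pow, aeval_X, sub_eq_zero] at hx
    exact hx
  have htop : (⊤ : Subalgebra F K) ≤ S := by
    rw [← Polynomial.SplittingField.adjoin_rootSet g]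
    exact Algebra.adjoin_le hroot_sub
  have hall : ∀ x : K, x ∈ g.rootSet K := by
    intro x
    have hx : x ^ (q ^ n) = x := htop (Algebra.mem_top) 
    rw [Polynomial.mem_rootSet_of_ne hgne]
    simp only [hg, map_sub, map_pow, aeval_X, sub_eq_zero]
    exact hx
  haveI : Fintype K := Fintype.ofFinite K
  have hcardK : Fintype.card K = q ^ n := by
    rw [← hcardroot]
    apply (Fintype.card_congr (Equiv.subtypeUnivEquiv hall)).symm
  rw [Module.card_eq_pow_finrank (K := F) (V := K)] at hcardK
  exact Nat.pow_right_injective hq1 hcardK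

end Ext

open MvPolynomial

lemma aux_zsmul_homog {σ F' : Type*} [CommRing F'] {P : MvPolynomial σ F'} {m : ℕ}
    (u : ℤˣ) (h : P.IsHomogeneous m) : (u • P).IsHomogeneous m := by
  rcases Int.units_eq_one_or u with rfl | rfl
  · simpa using h
  · have h2 : ((-1 : ℤˣ) • P) = -P := by
      rw [Units.smul_def]
      norm_num
    rw [h2]
    exact h.neg

lemma aux_norm_poly (F K : Type) [Field F] [Field K] [Algebra F K] [FiniteDimensional F K]
    (n m : ℕ) (b : Module.Basis (Fin n) F K) (φ : (Fin m → F) →ₗ[F] K) :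
    ∃ f : MvPolynomial (Fin m) F, f.IsHomogeneous n ∧
      ∀ v : Fin m → F, eval v f = Algebra.norm F (φ v) := by
  classical
  set L := Algebra.leftMulMatrix b
  set M : Matrix (Fin n) (Fin n) (MvPolynomial (Fin m) F) :=
    fun r s => ∑ i, C (L (φ (Pi.single i 1)) r s) * X i with hM
  refine ⟨M.det, ?_, ?_⟩
  · have hMh : ∀ r s, (M r s).IsHomogeneous 1 := by
      intro r s
      apply MvPolynomial.IsHomogeneous.sum
      intro i _
      simpa using (isHomogeneous_C _ (L (φ (Pi.single i 1)) r s)).mul (isHomogeneous_X F i)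
    rw [Matrix.det_apply]
    apply MvPolynomial.IsHomogeneous.sum
    intro σ _
    apply aux_zsmul_homog
    have := MvPolynomial.IsHomogeneous.prod Finset.univ (fun i => M (σ i) i) (fun _ => 1)
      (fun i _ => hMh (σ i) i)
    simpa using this
  · intro v
    have hv : φ v = ∑ i, v i • φ (Pi.single i 1) := by
      conv_lhs => rw [← Finset.univ_sum_single v]
      rw [map_sum]
      congr 1
      ext i
      rw [← map_smul]
      congr 1
      ext j
      by_cases h : i = j <;> simp [Pi.single_apply, h]
    have hdet := RingHom.map_det (eval v) M
    rw [hdet]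
    rw [Algebra.norm_eq_matrix_det b]
    congr 1
    ext r s
    simp only [RingHom.mapMatrix_apply, Matrix.map_apply, hM, map_sum, map_mul, eval_C, eval_X]
    rw [hv, map_sum]
    change (∑ i, C (L (φ (Pi.single i 1)) r s) * X i).eval v = _
    simp only [map_sum, map_mul, eval_C, eval_X, Matrix.sum_apply]
    congr 1
    ext i
    rw [map_smul]
    simp [mul_comm, L]


lemma aux_card_proj' (F : Type) [Field F] [Fintype F] (n : ℕ) :
    Nat.card (Projectivization F (Fin (n + 1) → F)) =
      ∑ i ∈ Finset.range (n + 1), Fintype.card F ^ i := by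
  have hq1 : 1 < Fintype.card F := Fintype.one_lt_card
  have h := aux_card_proj F n
  have hgeom : (Fintype.card F - 1) * ∑ i ∈ Finset.range (n + 1), Fintype.card F ^ i
      = Fintype.card F ^ (n + 1) - 1 := by
    have hz := geom_sum_mul ((Fintype.card F : ℤ)) (n + 1)
    have h1 : (1 : ℕ) ≤ Fintype.card F ^ (n + 1) := Nat.one_le_pow _ _ (by omega)
    zify [hq1.le, h1]
    push_cast at hz ⊢
    linarith [hz]
  exact Nat.eq_of_mul_eq_mul_left (by omega) (h.trans hgeom.symm)

theorem stmt_11 (F : Type) [Field F] [Fintype F] (n : ℕ) (hn : 1 ≤ n)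
    (X : Set (Projectivization F (Fin (n + 1) → F)))
    (hX : Nat.card X = ∑ i ∈ Finset.Icc 1 n, (Fintype.card F) ^ i) :
    IsLeast {d : ℕ | 0 < d ∧ ∃ f : MvPolynomial (Fin (n + 1)) F,
      f ≠ 0 ∧ f.IsHomogeneous d ∧
      ∀ (v : Fin (n + 1) → F) (hv : v ≠ 0),
        Projectivization.mk F v hv ∈ X → eval v f ≠ 0} n := by
  classical
  have hq1 : 1 < Fintype.card F := Fintype.one_lt_card
  haveI : Finite (Projectivization F (Fin (n + 1) → F)) := Quotient.finite _
  -- the complement of X is a single point p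
  have hcardP : Nat.card (Projectivization F (Fin (n + 1) → F))
      = 1 + ∑ i ∈ Finset.Icc 1 n, Fintype.card F ^ i := by
    rw [aux_card_proj' F n]
    have hins : Finset.range (n + 1) = insert 0 (Finset.Icc 1 n) := by
      ext x; simp; omega
    rw [hins, Finset.sum_insert (by simp)]
    simp
  have hcompl : Xᶜ.ncard = 1 := by
    have h1 := Set.ncard_add_ncard_compl X (Set.toFinite _) (Set.toFinite _)
    have hXn := hX
    rw [Nat.card_coe_set_eq] at hXn
    omega
  obtain ⟨p, hpc⟩ := Set.ncard_eq_one.mp hcompl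
  have hpnot : p ∉ X := by
    have : p ∈ Xᶜ := by rw [hpc]; exact rfl
    exact this
  have huniq : ∀ x, x ∉ X → x = p := by
    intro x hx
    have : x ∈ Xᶜ := hx
    rwa [hpc] at this
  have hw : p.rep ≠ 0 := p.rep_nonzero
  have hmkw : Projectivization.mk F p.rep hw = p := p.mk_rep
  constructor
  · -- n is in the set
    refine ⟨hn, ?_⟩
    have hrank : Module.finrank F (Polynomial.SplittingField
        (Polynomial.X ^ (Fintype.card F ^ n) - Polynomial.X : Polynomial F)) = n :=
      aux_finrank_splitting F n (by omega)
    have hrkQ : Module.finrank F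
        ((Fin (n + 1) → F) ⧸ Submodule.span F {p.rep}) = n := by
      have h1 := Submodule.finrank_quotient_add_finrank (Submodule.span F {p.rep})
      rw [finrank_span_singleton hw] at h1
      have h2 : Module.finrank F (Fin (n + 1) → F) = n + 1 := Module.finrank_fin_fun F
      omega
    obtain ⟨e⟩ := FiniteDimensional.nonempty_linearEquiv_of_finrank_eq
      (R := F) (M := (Fin (n + 1) → F) ⧸ Submodule.span F {p.rep})
      (M' := Polynomial.SplittingField
        (Polynomial.X ^ (Fintype.card F ^ n) - Polynomial.X : Polynomial F))
      (by rw [hrkQ, hrank])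
    obtain ⟨f, hfh, hfe⟩ := aux_norm_poly F _ n (n + 1)
      (Module.finBasisOfFinrankEq F _ hrank)
      (e.toLinearMap ∘ₗ (Submodule.span F {p.rep}).mkQ)
    have hker : ∀ v : Fin (n + 1) → F,
        (e.toLinearMap ∘ₗ (Submodule.span F {p.rep}).mkQ) v = 0
          ↔ v ∈ Submodule.span F {p.rep} := by
      intro v
      simp only [LinearMap.coe_comp, Function.comp_apply, LinearEquiv.coe_coe]
      rw [LinearEquiv.map_eq_zero_iff, Submodule.mkQ_apply, Submodule.Quotient.mk_eq_zero]
    have hval : ∀ v : Fin (n + 1) → F,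
        (e.toLinearMap ∘ₗ (Submodule.span F {p.rep}).mkQ) v ≠ 0 → eval v f ≠ 0 := by
      intro v hv
      rw [hfe]
      exact (Algebra.norm_ne_zero_iff_of_basis
        (Module.finBasisOfFinrankEq F _ hrank)).mpr hv
    have hf0 : f ≠ 0 := by
      obtain ⟨z, hz⟩ := e.surjective 1
      obtain ⟨v, hv⟩ := Submodule.mkQ_surjective (Submodule.span F {p.rep}) z
      have h1 : (e.toLinearMap ∘ₗ (Submodule.span F {p.rep}).mkQ) v = 1 := by
        simp [hv, hz]
      intro hcon
      apply hval v (by rw [h1]; exact one_ne_zero)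
      rw [hcon, map_zero]
    refine ⟨f, hf0, hfh, ?_⟩
    intro v hv hmem
    apply hval
    intro h0
    rw [hker] at h0
    obtain ⟨a, ha⟩ := Submodule.mem_span_singleton.mp h0
    have ha0 : a ≠ 0 := by rintro rfl; rw [zero_smul] at ha; exact hv ha.symm
    have heq : Projectivization.mk F v hv = p := by
      rw [← hmkw, Projectivization.mk_eq_mk_iff]
      exact ⟨Units.mk0 a ha0, by rw [Units.smul_def, Units.val_mk0]; exact ha⟩
    rw [heq] at hmem
    exact hpnot hmem
  · -- lower bound
    rintro d ⟨hd0, f, hf0, hfh, hfX⟩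
    by_contra hlt
    push_neg at hlt
    obtain ⟨j, hj⟩ := Function.ne_iff.mp hw
    haveI : CharP F (ringChar F) := ringChar.charP F
    haveI : Fact (ringChar F).Prime := ⟨CharP.char_is_prime F (ringChar F)⟩
    have hdegf : f.totalDegree = d := hfh.totalDegree hf0
    have hdvd := char_dvd_card_solutions_of_add_lt (ringChar F)
      (f₁ := f) (f₂ := (MvPolynomial.X j : MvPolynomial (Fin (n + 1)) F))
      (by rw [hdegf, totalDegree_X, Fintype.card_fin]; omega)
    have h0sol : eval (0 : Fin (n + 1) → F) f = 0 ∧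
        eval (0 : Fin (n + 1) → F) (MvPolynomial.X j) = 0 := by
      constructor
      · rw [eval_zero]
        show coeff 0 f = 0
        apply hfh.coeff_eq_zero
        simp
        omega
      · simp
    have hpos : 0 < Fintype.card { x : Fin (n + 1) → F //
        eval x f = 0 ∧ eval x (MvPolynomial.X j) = 0 } :=
      Fintype.card_pos_iff.mpr ⟨⟨0, h0sol⟩⟩
    have hge : 1 < Fintype.card { x : Fin (n + 1) → F //
        eval x f = 0 ∧ eval x (MvPolynomial.X j) = 0 } := by
      have h2 := (Fact.out : (ringChar F).Prime).two_le
      have := Nat.le_of_dvd hpos hdvd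
      omega
    obtain ⟨y, hy⟩ := Fintype.exists_ne_of_one_lt_card hge ⟨0, h0sol⟩
    have hx0 : y.1 ≠ 0 := by
      intro hcon
      exact hy (Subtype.ext hcon)
    have hxj : y.1 j = 0 := by
      have := y.2.2
      rwa [eval_X] at this
    have hmem : Projectivization.mk F y.1 hx0 ∈ X := by
      by_contra hnot
      have heq := huniq _ hnot
      rw [← hmkw, Projectivization.mk_eq_mk_iff] at heq
      obtain ⟨a, ha⟩ := heq
      apply hj
      have hyj : y.1 j = (a : F) * p.rep j := by rw [← ha]; simp [Units.smul_def]
      rw [hyj] at hxj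
      have := (mul_eq_zero.mp hxj).resolve_left a.ne_zero
      simpa using this
    exact hfX y.1 hx0 hmem y.2.1
end

section
/- Let X ⊆ P^n(F_q) and let d be the largest integer such that q^(n-d+2) + q^(n-d+3) + ... + q^n < |X|. Then every homogeneous polynomial over F_q of degree less than d vanishes at some point of X; equivalently, the minimal degree of a nonvanishing form on X is at least d. -/
open MvPolynomial

section Aux

lemma eval_smul_of_homog {F : Type} [Field F] {σ : Type} [Fintype σ]
    {f : MvPolynomial σ F} {e : ℕ} (hf : f.IsHomogeneous e) (c : F) (v : σ → F) :
    eval (c • v) f = c ^ e * eval v f := by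
  rw [eval_eq, eval_eq, Finset.mul_sum]
  refine Finset.sum_congr rfl fun d hd => ?_
  have hdeg : ∑ i ∈ d.support, d i = e := by
    have := hf (Finsupp.mem_support_iff.mp hd)
    simpa [Finsupp.weight_apply, Finsupp.sum] using this
  have : ∏ i ∈ d.support, (c • v) i ^ d i = c ^ e * ∏ i ∈ d.support, v i ^ d i := by
    simp only [Pi.smul_apply, smul_eq_mul, mul_pow, Finset.prod_mul_distrib,
      Finset.prod_pow_eq_pow_sum, hdeg]
  rw [this]; ring

lemma bose_burton (F : Type) [Field F] [Fintype F] :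
    ∀ (t : ℕ), 1 ≤ t →
    ∀ (V : Type) [AddCommGroup V] [Module F V] [Finite V],
      t ≤ Module.finrank F V →
      ∀ Z : Set V, (0 : V) ∈ Z →
        (∀ (c : F) (v : V), v ∈ Z → c • v ∈ Z) →
        (∀ W : Submodule F V, t ≤ Module.finrank F W → ∃ z : V, z ∈ Z ∧ z ∈ W ∧ z ≠ 0) →
        (Fintype.card F) ^ (Module.finrank F V - t + 1) ≤ Nat.card Z := by
  intro t ht
  induction t, ht using Nat.le_induction with
  | base =>
    intro V _ _ _ hm Z h0 hcone hblock
    have hZ : Z = Set.univ := by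
      ext v
      simp only [Set.mem_univ, iff_true]
      rcases eq_or_ne v 0 with rfl | hv
      · exact h0
      · obtain ⟨z, hzZ, hzW, hz0⟩ := hblock (Submodule.span F {v}) (by
          rw [finrank_span_singleton hv])
        obtain ⟨c, rfl⟩ := Submodule.mem_span_singleton.mp hzW
        have hc : c ≠ 0 := by rintro rfl; simp at hz0
        have := hcone c⁻¹ _ hzZ
        rwa [smul_smul, inv_mul_cancel₀ hc, one_smul] at this
    have : Fintype V := Fintype.ofFinite V
    rw [hZ, Nat.card_congr (Equiv.Set.univ V), Nat.card_eq_fintype_card,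
      Module.card_eq_pow_finrank (K := F) (V := V)]
    exact Nat.pow_le_pow_right (Nat.pos_of_ne_zero (by positivity)) (by omega)
  | succ t ht IH =>
    intro V _ _ _ hm Z h0 hcone hblock
    by_cases hZuniv : Z = Set.univ
    · have : Fintype V := Fintype.ofFinite V
      rw [hZuniv, Nat.card_congr (Equiv.Set.univ V), Nat.card_eq_fintype_card,
        Module.card_eq_pow_finrank (K := F) (V := V)]
      have h2 : 1 < Fintype.card F := Fintype.one_lt_card
      exact Nat.pow_le_pow_right (by omega) (by omega)
    · obtain ⟨P, hP⟩ : ∃ P : V, P ∉ Z := by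
        by_contra h; push_neg at h; exact hZuniv (Set.eq_univ_iff_forall.mpr h)
      have hP0 : P ≠ 0 := fun h => hP (h ▸ h0)
      set S : Submodule F V := Submodule.span F {P} with hS
      have hSrank : Module.finrank F S = 1 := finrank_span_singleton hP0
      have hquot : Module.finrank F (V ⧸ S) = Module.finrank F V - 1 := by
        have := Submodule.finrank_quotient_add_finrank S
        omega
      haveI : Finite (V ⧸ S) := Finite.of_surjective S.mkQ S.mkQ_surjective
      set π := S.mkQ with hπ
      set Z' : Set (V ⧸ S) := π '' Z with hZ'
      have key := IH (V ⧸ S) (by omega) Z' ⟨0, h0, map_zero _⟩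
        (by rintro c _ ⟨v, hv, rfl⟩; exact ⟨c • v, hcone c v hv, map_smul _ _ _⟩)
        ?_
      · have hle : Nat.card Z' ≤ Nat.card Z := Set.ncard_image_le (Set.toFinite Z)
        calc (Fintype.card F) ^ (Module.finrank F V - (t+1) + 1)
            = (Fintype.card F) ^ (Module.finrank F (V ⧸ S) - t + 1) := by rw [hquot]; congr 1; omega
          _ ≤ Nat.card Z' := key
          _ ≤ Nat.card Z := hle
      · intro W' hW'
        set W : Submodule F V := W'.comap π with hW
        have hrankW : t + 1 ≤ Module.finrank F W := by
          have hPW : P ∈ W := by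
            simp only [hW, Submodule.mem_comap, hπ]
            have : π P = 0 := by
              simp [hπ, Submodule.mkQ_apply, Submodule.Quotient.mk_eq_zero, hS,
                Submodule.mem_span_singleton_self]
            rw [this]; exact W'.zero_mem
          set ρ : W →ₗ[F] W' := π.restrict (fun x hx => hx) with hρ
          have hsurj : Function.Surjective ρ := by
            rintro ⟨w', hw'⟩
            obtain ⟨v, hv⟩ := S.mkQ_surjective w'
            refine ⟨⟨v, ?_⟩, ?_⟩
            · simp only [hW, Submodule.mem_comap]; rw [hv]; exact hw'
            · apply Subtype.ext; simpa [hρ, LinearMap.restrict_apply, hπ] using hv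
          have hrn := LinearMap.finrank_range_add_finrank_ker ρ
          have h1 : Module.finrank F (LinearMap.range ρ) = Module.finrank F W' := by
            rw [LinearMap.range_eq_top.mpr hsurj, finrank_top]
          have h2 : 1 ≤ Module.finrank F (LinearMap.ker ρ) := by
            rw [Nat.one_le_iff_ne_zero, ← Nat.pos_iff_ne_zero, Module.finrank_pos_iff]
            refine ⟨⟨⟨⟨P, hPW⟩, ?_⟩, 0, ?_⟩⟩
            · rw [LinearMap.mem_ker]; apply Subtype.ext
              simpa [hρ, LinearMap.restrict_apply, hπ, Submodule.Quotient.mk_eq_zero, hS] using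
                Submodule.mem_span_singleton_self P
            · intro h; apply hP0; simpa [Subtype.ext_iff] using h
          omega
        obtain ⟨z, hzZ, hzW, hz0⟩ := hblock W hrankW
        refine ⟨π z, ⟨z, hzZ, rfl⟩, hzW, ?_⟩
        intro hz
        have : z ∈ S := by rwa [← S.ker_mkQ, LinearMap.mem_ker]
        obtain ⟨c, rfl⟩ := Submodule.mem_span_singleton.mp this
        have hc : c ≠ 0 := by rintro rfl; simp at hz0
        apply hP
        have := hcone c⁻¹ _ hzZ
        rwa [smul_smul, inv_mul_cancel₀ hc, one_smul] at this

lemma eval_bind₁' {F : Type} [CommSemiring F] {m w : ℕ} (φ : Fin m → MvPolynomial (Fin w) F)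
    (f : MvPolynomial (Fin m) F) (x : Fin w → F) :
    eval x (bind₁ φ f) = eval (fun i => eval x (φ i)) f := by
  rw [show (eval x : MvPolynomial (Fin w) F →+* F) = eval₂Hom (RingHom.id F) x from rfl,
    eval₂Hom_bind₁]
  rfl

lemma eval_zero_of_homog {F : Type} [Field F] {n e : ℕ} {f : MvPolynomial (Fin n) F}
    (hf : f.IsHomogeneous e) (he : 0 < e) : eval (0 : Fin n → F) f = 0 := by
  rw [show (eval (0 : Fin n → F)) f = constantCoeff f from congrFun (congrArg _ eval_zero) f]
  exact hf.coeff_eq_zero (by simpa [Finsupp.degree] using he.ne)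

lemma blocking {F : Type} [Field F] [Fintype F] {n e : ℕ} {f : MvPolynomial (Fin (n + 1)) F}
    (hf : f.IsHomogeneous e) (he : 0 < e) (W : Submodule F (Fin (n + 1) → F))
    (hW : e + 1 ≤ Module.finrank F W) :
    ∃ z : Fin (n + 1) → F, eval z f = 0 ∧ z ∈ W ∧ z ≠ 0 := by
  classical
  set w := Module.finrank F W with hw
  have : FiniteDimensional F W := inferInstance
  let b : Module.Basis (Fin w) F W := Module.finBasis F W
  set φ : Fin (n + 1) → MvPolynomial (Fin w) F :=
    fun i => ∑ j, C ((b j : Fin (n + 1) → F) i) * X j with hφ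
  have hφh : ∀ i, (φ i).IsHomogeneous 1 := fun i =>
    IsHomogeneous.sum _ _ _ fun j _ => isHomogeneous_C_mul_X _ _
  set g : MvPolynomial (Fin w) F := bind₁ φ f with hg
  have hgh : g.IsHomogeneous e := by
    have := hf.aeval φ hφh
    rwa [one_mul, aeval_eq_bind₁] at this
  have htd : g.totalDegree < Fintype.card (Fin w) := by
    simpa using lt_of_le_of_lt hgh.totalDegree_le (by omega : e < w)
  set p := ringChar F with hp
  have hchar : CharP F p := ringChar.charP F
  have hprime : p.Prime := CharP.char_is_prime F p
  have hdvd := char_dvd_card_solutions (K := F) (σ := Fin w) p htd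
  have hzero : eval (0 : Fin w → F) g = 0 := by
    rw [eval_bind₁']
    have h1 : (fun i => eval (0 : Fin w → F) (φ i)) = (0 : Fin (n + 1) → F) := by
      funext i; simp [hφ]
    rw [h1]
    exact eval_zero_of_homog hf he
  have hcard2 : 2 ≤ Fintype.card { x : Fin w → F // eval x g = 0 } := by
    have hpos : 0 < Fintype.card { x : Fin w → F // eval x g = 0 } :=
      Fintype.card_pos_iff.mpr ⟨⟨0, hzero⟩⟩
    have := Nat.le_of_dvd hpos hdvd
    exact le_trans hprime.two_le this
  obtain ⟨x, hx, hx0⟩ : ∃ x : Fin w → F, eval x g = 0 ∧ x ≠ 0 := by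
    by_contra hcon
    push_neg at hcon
    have : ∀ y : { x : Fin w → F // eval x g = 0 }, y = ⟨0, hzero⟩ := by
      rintro ⟨y, hy⟩
      rcases eq_or_ne y 0 with rfl | hy0
      · rfl
      · exact absurd (hcon y hy) hy0
    have := Fintype.card_le_one_iff.mpr (fun a b => (this a).trans (this b).symm)
    omega
  set u : W := b.equivFun.symm x with hu
  refine ⟨(u : Fin (n + 1) → F), ?_, u.2, ?_⟩
  · have hcoord : (fun i => eval x (φ i)) = (u : Fin (n + 1) → F) := by
      funext i
      rw [hu, Module.Basis.equivFun_symm_apply]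
      simp only [hφ, map_sum, eval_mul, eval_C, eval_X]
      simp only [AddSubmonoidClass.coe_finset_sum, Finset.sum_apply, SetLike.val_smul,
        Pi.smul_apply, smul_eq_mul]
      exact Finset.sum_congr rfl fun j _ => mul_comm _ _
    rw [← hcoord, ← eval_bind₁', ← hg, hx]
  · intro hz
    apply hx0
    have : u = 0 := by
      apply Subtype.ext; exact hz
    have hxz : b.equivFun.symm x = b.equivFun.symm 0 := by rw [← hu, this, map_zero]
    exact b.equivFun.symm.injective hxz

lemma count_zeros {F : Type} [Field F] [Fintype F] {n e : ℕ} {f : MvPolynomial (Fin (n + 1)) F}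
    (hf : f.IsHomogeneous e) (he : 0 < e) :
    (Fintype.card F) ^ (n + 1 - e) ≤ Nat.card {v : Fin (n + 1) → F | eval v f = 0} := by
  set Z : Set (Fin (n + 1) → F) := {v | eval v f = 0} with hZ
  have h0 : (0 : Fin (n + 1) → F) ∈ Z := eval_zero_of_homog hf he
  rcases le_or_gt (n + 1) e with h | h
  · rw [Nat.sub_eq_zero_of_le h, pow_zero]
    haveI : Nonempty Z := ⟨⟨0, h0⟩⟩
    exact Nat.card_pos
  · have hfr : Module.finrank F (Fin (n + 1) → F) = n + 1 := Module.finrank_fin_fun F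
    have hbb := bose_burton F (e + 1) (by omega) (Fin (n + 1) → F) (by rw [hfr]; omega) Z h0
      (fun c v hv => by
        have : eval (c • v) f = c ^ e * eval v f := eval_smul_of_homog hf c v
        simp only [hZ, Set.mem_setOf_eq] at hv ⊢
        rw [this, hv, mul_zero])
      (fun W hW => by
        obtain ⟨z, h1, h2, h3⟩ := blocking hf he W hW
        exact ⟨z, h1, h2, h3⟩)
    rw [hfr] at hbb
    have hexp : n + 1 - (e + 1) + 1 = n + 1 - e := by omega
    rwa [hexp] at hbb

lemma telescope (q n : ℕ) (hq : 1 ≤ q) :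
    ∀ e : ℕ, q ^ (n + 1) ≤ q ^ (n + 1 - e) + (q - 1) * ∑ i ∈ Finset.range e, q ^ (n - i) := by
  intro e
  induction e with
  | zero => simp
  | succ e ih =>
    have key : q ^ (n + 1 - e) ≤ q ^ (n + 1 - (e + 1)) + (q - 1) * q ^ (n - e) := by
      rcases le_or_gt e n with h | h
      · have h1 : n + 1 - e = (n - e) + 1 := by omega
        have h2 : n + 1 - (e + 1) = n - e := by omega
        rw [h1, h2, pow_succ]
        have hq' : q = 1 + (q - 1) := by omega
        calc q ^ (n - e) * q = q ^ (n - e) * (1 + (q - 1)) := by rw [← hq']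
          _ = q ^ (n - e) + (q - 1) * q ^ (n - e) := by ring
          _ ≤ q ^ (n - e) + (q - 1) * q ^ (n - e) := le_refl _
      · have h1 : n + 1 - e = 0 := by omega
        have h2 : n + 1 - (e + 1) = 0 := by omega
        simp [h1, h2]
    rw [Finset.sum_range_succ, Nat.mul_add]
    calc q ^ (n + 1) ≤ q ^ (n + 1 - e) + (q - 1) * ∑ i ∈ Finset.range e, q ^ (n - i) := ih
      _ ≤ (q ^ (n + 1 - (e + 1)) + (q - 1) * q ^ (n - e))
            + (q - 1) * ∑ i ∈ Finset.range e, q ^ (n - i) := by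
          exact Nat.add_le_add_right key _
      _ = q ^ (n + 1 - (e + 1)) + ((q - 1) * ∑ i ∈ Finset.range e, q ^ (n - i)
            + (q - 1) * q ^ (n - e)) := by ring

end Aux

theorem stmt_13 (F : Type) [Field F] [Fintype F] (n : ℕ)
    (X : Set (Projectivization F (Fin (n + 1) → F))) (d : ℕ)
    (hlt : ∑ i ∈ Finset.range (d - 1), (Fintype.card F) ^ (n - i) < Nat.card X)
    (hgreatest : ∀ d' : ℕ,
      ∑ i ∈ Finset.range (d' - 1), (Fintype.card F) ^ (n - i) < Nat.card X → d' ≤ d) :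
    ∀ e : ℕ, 0 < e → e < d → ∀ f : MvPolynomial (Fin (n + 1)) F, f.IsHomogeneous e →
      ∃ (v : Fin (n + 1) → F) (hv : v ≠ 0),
        Projectivization.mk F v hv ∈ X ∧ eval v f = 0 := by
  intro e he hed f hf
  classical
  by_contra hcon
  push_neg at hcon
  have hno : ∀ (v : Fin (n + 1) → F) (hv : v ≠ 0),
      Projectivization.mk F v hv ∈ X → eval v f ≠ 0 := fun v hv hmem => hcon v hv hmem
  set q := Fintype.card F with hq
  have hq2 : 1 < q := Fintype.one_lt_card
  -- the injection
  set B := {v : Fin (n + 1) → F // eval v f ≠ 0} with hB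
  have hinj : ∃ j : Fˣ × X → B, Function.Injective j := by
    refine ⟨fun cx => ⟨(cx.1 : F) • (cx.2 : Projectivization F (Fin (n + 1) → F)).rep, ?_⟩, ?_⟩
    · rw [eval_smul_of_homog hf]
      have hrep0 := (cx.2 : Projectivization F (Fin (n + 1) → F)).rep_nonzero
      have hmem : Projectivization.mk F _ hrep0 ∈ X := by
        rw [Projectivization.mk_rep]; exact cx.2.2
      exact mul_ne_zero (pow_ne_zero _ cx.1.ne_zero) (hno _ hrep0 hmem)
    · rintro ⟨c, P, hP⟩ ⟨c', P', hP'⟩ hcc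
      have hvec : (c : F) • P.rep = (c' : F) • P'.rep := congrArg Subtype.val hcc
      have hr0 := P.rep_nonzero
      have hr0' := P'.rep_nonzero
      have hPP : P = P' := by
        have h1 : Projectivization.mk F ((c : F) • P.rep)
            (smul_ne_zero c.ne_zero hr0) = P := by
          rw [show Projectivization.mk F ((c : F) • P.rep) (smul_ne_zero c.ne_zero hr0)
              = Projectivization.mk F P.rep hr0 from
            (Projectivization.mk_eq_mk_iff' F _ _ _ _).mpr ⟨c, rfl⟩]
          exact Projectivization.mk_rep P
        have h2 : Projectivization.mk F ((c' : F) • P'.rep)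
            (smul_ne_zero c'.ne_zero hr0') = P' := by
          rw [show Projectivization.mk F ((c' : F) • P'.rep) (smul_ne_zero c'.ne_zero hr0')
              = Projectivization.mk F P'.rep hr0' from
            (Projectivization.mk_eq_mk_iff' F _ _ _ _).mpr ⟨c', rfl⟩]
          exact Projectivization.mk_rep P'
        rw [← h1, ← h2]
        congr 1
      subst hPP
      have : (c : F) = (c' : F) := smul_left_injective F hr0 hvec
      exact Prod.ext (Units.ext this) rfl
  obtain ⟨j, hj⟩ := hinj
  have hcardB : (q - 1) * Nat.card X ≤ Nat.card B := by
    calc (q - 1) * Nat.card X = Nat.card Fˣ * Nat.card X := by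
          rw [Nat.card_eq_fintype_card (α := Fˣ), Fintype.card_units]
      _ = Nat.card (Fˣ × X) := (Nat.card_prod _ _).symm
      _ ≤ Nat.card B := Nat.card_le_card_of_injective j hj
  set A := {v : Fin (n + 1) → F | eval v f = 0} with hA
  have hcardA : q ^ (n + 1 - e) ≤ Nat.card A := count_zeros hf he
  have hsplit : Nat.card A + Nat.card B = q ^ (n + 1) := by
    classical
    rw [Nat.card_eq_fintype_card (α := A), Nat.card_eq_fintype_card (α := B)]
    have h1 : Fintype.card B = Fintype.card (Fin (n + 1) → F) - Fintype.card A := by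
      exact Fintype.card_subtype_compl _
    have h2 : Fintype.card A ≤ Fintype.card (Fin (n + 1) → F) :=
      Fintype.card_subtype_le _
    have h3 : Fintype.card (Fin (n + 1) → F) = q ^ (n + 1) := by
      simp [hq, Fintype.card_fun]
    omega
  have htel := telescope q n (by omega) e
  have hmul : (q - 1) * Nat.card X ≤ (q - 1) * ∑ i ∈ Finset.range e, q ^ (n - i) := by
    have := hcardB
    have := hcardA
    omega
  have hXle : Nat.card X ≤ ∑ i ∈ Finset.range e, q ^ (n - i) :=
    Nat.le_of_mul_le_mul_left hmul (by omega)
  have hsub : ∑ i ∈ Finset.range e, q ^ (n - i) ≤ ∑ i ∈ Finset.range (d - 1), q ^ (n - i) :=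
    Finset.sum_le_sum_of_subset (Finset.range_subset_range.mpr (by omega))
  omega
end

section
/- Let X ⊆ P^n(F_q), let d_1 be the largest integer with q^(n-d_1+2) + ... + q^n < |X| and d_2 the least integer with |X| ≤ q + ... + q^(d_2). Then d_1 ≤ Nz(X) ≤ d_2, where Nz(X) denotes the minimal degree of a homogeneous polynomial over F_q nonvanishing at every point of X. -/
open Module Finset

lemma geom_nat (q m : ℕ) (hq : 1 ≤ q) :
    (q - 1) * ∑ i ∈ range m, q ^ i + 1 = q ^ m := by
  have h := geom_sum_mul (q : ℤ) m
  have hc : ((q - 1 : ℕ) : ℤ) = (q : ℤ) - 1 := by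
    rw [Nat.cast_sub hq]; norm_num
  have h2 : ((q - 1 : ℕ) : ℤ) * (∑ i ∈ range m, (q:ℕ) ^ i : ℕ) + 1 = ((q:ℕ) ^ m : ℕ) := by
    push_cast
    rw [hc]
    push_cast
    linarith [h]
  exact_mod_cast h2

open scoped LinearAlgebra.Projectivization

variable {F : Type} [Field F] [Fintype F]

lemma projFinite (V : Type) [AddCommGroup V] [Module F V] [FiniteDimensional F V] :
    Finite (ℙ F V) := by
  have : Finite V := Module.finite_of_finite F
  have : Finite {v : V // v ≠ 0} := Subtype.finite
  exact Quotient.finite _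

lemma card_proj (V : Type) [AddCommGroup V] [Module F V] [FiniteDimensional F V] :
    Nat.card (ℙ F V) = ∑ i ∈ range (finrank F V), (Fintype.card F) ^ i := by
  classical
  have hF : 1 < Fintype.card F := Fintype.one_lt_card
  have : Finite V := Module.finite_of_finite F
  have : Fintype V := Fintype.ofFinite _
  haveI : Finite (ℙ F V) := projFinite V
  haveI : Fintype (ℙ F V) := Fintype.ofFinite _
  have e : (ℙ F V) × Fˣ ≃ {v : V // v ≠ 0} := by
    refine Equiv.ofBijective (fun x => ⟨(x.2 : F) • x.1.rep, ?_⟩) ⟨?_, ?_⟩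
    · exact smul_ne_zero (Units.ne_zero x.2) (Projectivization.rep_nonzero x.1)
    · rintro ⟨x, a⟩ ⟨y, b⟩ h
      simp only [Subtype.mk.injEq] at h
      have hx : Projectivization.mk F ((a:F) • x.rep) (smul_ne_zero (Units.ne_zero a) x.rep_nonzero) = x := by
        conv_rhs => rw [← x.mk_rep]
        rw [Projectivization.mk_eq_mk_iff]
        exact ⟨a, rfl⟩
      have hy : Projectivization.mk F ((b:F) • y.rep) (smul_ne_zero (Units.ne_zero b) y.rep_nonzero) = y := by
        conv_rhs => rw [← y.mk_rep]
        rw [Projectivization.mk_eq_mk_iff]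
        exact ⟨b, rfl⟩
      have hxy2 : x = y := by rw [← hx, ← hy]; congr 1
      subst hxy2
      have hab : (a : F) = b := by
        by_contra hab
        have h0 : ((a : F) - b) • x.rep = 0 := by rw [sub_smul, h, sub_self]
        rcases smul_eq_zero.1 h0 with h' | h'
        · exact hab (sub_eq_zero.1 h')
        · exact x.rep_nonzero h'
      simp [Prod.ext_iff, Units.ext_iff, hab]
    · rintro ⟨v, hv⟩
      obtain ⟨a, ha⟩ := Projectivization.exists_smul_eq_mk_rep F v hv
      refine ⟨⟨Projectivization.mk F v hv, a⁻¹⟩, ?_⟩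
      simp only [Subtype.mk.injEq]
      rw [← ha, Units.smul_def, Units.val_inv_eq_inv_val, smul_smul,
        inv_mul_cancel₀ (Units.ne_zero a), one_smul]
  have hcard : Nat.card (ℙ F V) * (Fintype.card F - 1) = Fintype.card F ^ finrank F V - 1 := by
    have h1 : Fintype.card ((ℙ F V) × Fˣ) = Fintype.card {v : V // v ≠ 0} := Fintype.card_congr e
    rw [Fintype.card_prod, Fintype.card_units] at h1
    have h2 : Fintype.card {v : V // v ≠ 0} = Fintype.card V - 1 := by
      have := Fintype.card_subtype_compl (p := fun v : V => v = 0)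
      simp only [Fintype.card_subtype_eq] at this
      convert this using 2
    have h3 : Fintype.card V = Fintype.card F ^ finrank F V := by
      rw [Module.card_fintype (Module.finBasis F V), Fintype.card_fin]
    rw [h2, h3] at h1
    rw [Nat.card_eq_fintype_card]
    exact h1
  have hg := geom_nat (Fintype.card F) (finrank F V) (le_of_lt hF)
  have hg2 : (∑ i ∈ range (finrank F V), (Fintype.card F) ^ i) * (Fintype.card F - 1) + 1
      = Fintype.card F ^ finrank F V := by rw [mul_comm] at hg; exact hg
  have hpow : 1 ≤ Fintype.card F ^ finrank F V := Nat.one_le_pow _ _ (by omega)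
  have key : Nat.card (ℙ F V) * (Fintype.card F - 1)
      = (∑ i ∈ range (finrank F V), (Fintype.card F) ^ i) * (Fintype.card F - 1) := by omega
  exact Nat.eq_of_mul_eq_mul_right (by omega) key

lemma BB (d m : ℕ) (V : Type) [AddCommGroup V] [Module F V] [FiniteDimensional F V]
    (hm : finrank F V = m) (X : Set (ℙ F V))
    (hX : Nat.card X < ∑ i ∈ range (d + 1), (Fintype.card F) ^ i) :
    ∃ W : Submodule F V, finrank F W = m - d ∧
      ∀ (v : V) (hv : v ≠ 0), Projectivization.mk F v hv ∈ X → v ∉ W := by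
  classical
  induction m generalizing V X with
  | zero =>
    refine ⟨⊥, by simp, fun v hv _ hmem => hv ?_⟩
    simpa using hmem
  | succ m ih =>
    haveI : Finite (ℙ F V) := projFinite V
    rcases le_or_gt (m + 1) d with hmd | hdm
    · refine ⟨⊥, by simp [Nat.sub_eq_zero_of_le hmd, finrank_bot], fun v hv _ hmem => hv ?_⟩
      simpa using hmem
    · rcases Nat.eq_zero_or_pos d with rfl | hd
      · -- X is empty
        have hX0 : X = ∅ := by
          have : Nat.card X = 0 := by simpa using hX
          rw [Nat.card_coe_set_eq, Set.ncard_eq_zero X.toFinite] at this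
          exact this
        exact ⟨⊤, by simpa using hm, fun v hv hmem => by simp [hX0] at hmem⟩
      · -- find a point not in X
        have hcard : Nat.card X < Nat.card (ℙ F V) := by
          rw [card_proj V, hm]
          exact lt_of_lt_of_le hX (Finset.sum_le_sum_of_subset
            (Finset.range_subset_range.2 (by omega)))
        have hPex : ∃ P : ℙ F V, P ∉ X := by
          by_contra h
          push_neg at h
          have : X = Set.univ := Set.eq_univ_of_forall h
          rw [this] at hcard
          simp only [Nat.card_coe_set_eq, Set.ncard_univ] at hcard
          omega
        obtain ⟨P, hP⟩ := hPex
        set L : Submodule F V := F ∙ P.rep with hL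
        have hLrank : finrank F L = 1 := finrank_span_singleton P.rep_nonzero
        set π := L.mkQ with hπdef
        have hV' : finrank F (V ⧸ L) = m := by
          have := Submodule.finrank_quotient_add_finrank L
          omega
        have hntV' : Nontrivial (V ⧸ L) := by
          apply Module.nontrivial_of_finrank_pos (R := F)
          omega
        haveI := hntV'
        -- the image of X
        set X' : Set (ℙ F (V ⧸ L)) := {y | ∃ (v : V) (hv : v ≠ 0) (hπv : π v ≠ 0),
          Projectivization.mk F v hv ∈ X ∧ y = Projectivization.mk F (π v) hπv} with hX'def
        -- X' is contained in the image of X under a function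
        have hXim : X' ⊆ (fun x : ℙ F V =>
            if h : π x.rep = 0 then Classical.arbitrary _ else Projectivization.mk F (π x.rep) h) '' X := by
          rintro y ⟨v, hv, hπv, hvX, rfl⟩
          refine ⟨Projectivization.mk F v hv, hvX, ?_⟩
          obtain ⟨a, ha⟩ := Projectivization.exists_smul_eq_mk_rep F v hv
          have hrep : π (Projectivization.mk F v hv).rep = (a : F) • π v := by
            rw [← ha, Units.smul_def, map_smul]
          have hne : π (Projectivization.mk F v hv).rep ≠ 0 := by
            rw [hrep]
            exact smul_ne_zero (Units.ne_zero a) hπv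
          dsimp only
          rw [dif_neg hne, Projectivization.mk_eq_mk_iff]
          exact ⟨a, by rw [hrep, Units.smul_def]⟩
        have hX'card : Nat.card X' ≤ Nat.card X := by
          rw [Nat.card_coe_set_eq, Nat.card_coe_set_eq]
          exact le_trans (Set.ncard_le_ncard hXim (X.toFinite.image _))
            (Set.ncard_image_le X.toFinite)
        obtain ⟨W', hW'rank, hW'⟩ := ih (V ⧸ L) hV' X' (lt_of_le_of_lt hX'card hX)
        refine ⟨W'.comap π, ?_, ?_⟩
        · -- rank computation
          have hle : L ≤ W'.comap π := by
            intro x hx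
            simp only [Submodule.mem_comap, hπdef, Submodule.mkQ_apply]
            rw [(Submodule.Quotient.mk_eq_zero L).2 hx]
            exact W'.zero_mem
          set f := π.comp (W'.comap π).subtype with hf
          have hker : LinearMap.ker f = Submodule.comap (W'.comap π).subtype L := by
            rw [hf, LinearMap.ker_comp, hπdef, Submodule.ker_mkQ]
          have hrange : LinearMap.range f = W' := by
            rw [hf, LinearMap.range_comp, Submodule.range_subtype, Submodule.map_comap_eq,
              hπdef, Submodule.range_mkQ, top_inf_eq]
          have h1 := LinearMap.finrank_range_add_finrank_ker f
          rw [hker, hrange] at h1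
          have h2 : finrank F (Submodule.comap (W'.comap π).subtype L) = 1 := by
            rw [← hLrank]
            exact LinearEquiv.finrank_eq (Submodule.comapSubtypeEquivOfLe hle)
          rw [hW'rank, h2] at h1
          omega
        · intro v hv hmem hvW
          rcases eq_or_ne (π v) 0 with hπv | hπv
          · -- v ∈ L, so mk v = P
            have hvL : v ∈ L := by
              rwa [hπdef, Submodule.mkQ_apply, Submodule.Quotient.mk_eq_zero] at hπv
            rw [hL, Submodule.mem_span_singleton] at hvL
            obtain ⟨c, hc⟩ := hvL
            have hc0 : c ≠ 0 := by rintro rfl; rw [zero_smul] at hc; exact hv hc.symm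
            have : Projectivization.mk F v hv = P := by
              conv_rhs => rw [← P.mk_rep]
              rw [Projectivization.mk_eq_mk_iff']
              exact ⟨c, hc⟩
            rw [this] at hmem
            exact hP hmem
          · exact hW' (π v) hπv ⟨v, hv, hπv, hmem, rfl⟩ (Submodule.mem_comap.1 hvW)

open MvPolynomial

omit [Fintype F] in
lemma my_aeval_eq_eval {σ : Type*} (v : σ → F) (p : MvPolynomial σ F) :
    aeval v p = eval v p := by
  rfl

omit [Fintype F] in
lemma my_eval_aeval {σ τ : Type*} (g : σ → MvPolynomial τ F) (N : MvPolynomial σ F)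
    (v : τ → F) : eval v (aeval g N) = eval (fun i => eval v (g i)) N := by
  rw [← my_aeval_eq_eval, comp_aeval_apply (f := g) (φ := aeval v) (p := N)]
  simp_rw [my_aeval_eq_eval]

open Polynomial in
lemma exists_ext (e : ℕ) (he : e ≠ 0) :
    ∃ (K : Type) (_ : Field K) (_ : Algebra F K) (_ : FiniteDimensional F K),
      finrank F K = e := by
  classical
  have hq : 1 < Fintype.card F := Fintype.one_lt_card
  refine ⟨(Polynomial.X ^ (Fintype.card F) ^ e - Polynomial.X : F[X]).SplittingField,
    inferInstance, inferInstance, inferInstance, ?_⟩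
  set g : F[X] := Polynomial.X ^ (Fintype.card F) ^ e - Polynomial.X with hg
  set K := g.SplittingField with hK
  obtain ⟨p, hchar⟩ := CharP.exists F
  haveI := hchar
  obtain ⟨mm, hpp, hqm⟩ := FiniteField.card F p
  haveI hprime : Fact p.Prime := ⟨hpp⟩
  haveI : CharP K p := charP_of_injective_algebraMap' F (A := K) p
  haveI : Finite K := Module.finite_of_finite F
  haveI : Fintype K := Fintype.ofFinite K
  have hdvd : p ∣ (Fintype.card F) ^ e := by
    rw [hqm, ← pow_mul]
    exact dvd_pow_self p (by positivity)
  have hsep : g.Separable := galois_poly_separable p ((Fintype.card F) ^ e) hdvd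
  have aux : g ≠ 0 := FiniteField.X_pow_card_pow_sub_X_ne_zero F he hq
  have key : Fintype.card (g.rootSet K) = g.natDegree :=
    card_rootSet_eq_natDegree hsep (SplittingField.splits g)
  have nat_degree_eq : g.natDegree = (Fintype.card F) ^ e :=
    FiniteField.X_pow_card_pow_sub_X_natDegree_eq F he hq
  rw [nat_degree_eq] at key
  have hqe : (Fintype.card F) ^ e = p ^ ((mm : ℕ) * e) := by rw [hqm, pow_mul]
  suffices huniv : g.rootSet K = Set.univ by
    have keyK : Fintype.card K = Fintype.card F ^ e :=
      (Fintype.card_congr ((Equiv.Set.univ K).symm.trans (Equiv.setCongr huniv.symm))).trans key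
    rw [card_eq_pow_finrank (K := F) (V := K)] at keyK
    exact Nat.pow_right_injective hq keyK
  rw [Set.eq_univ_iff_forall]
  suffices h2 : ∀ (x) (_ : x ∈ (⊤ : Subalgebra F K)), x ∈ g.rootSet K by
    simpa using h2
  rw [← SplittingField.adjoin_rootSet]
  simp_rw [Algebra.mem_adjoin_iff]
  intro x hx
  have hroot : ∀ y : K, y ∈ g.rootSet K ↔ y ^ (Fintype.card F) ^ e = y := by
    intro y
    rw [mem_rootSet_of_ne aux]
    show (Polynomial.aeval y) (Polynomial.X ^ (Fintype.card F) ^ e - Polynomial.X) = 0 ↔ _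
    simp only [map_sub, map_pow, Polynomial.aeval_X]
    rw [sub_eq_zero]
  simp_rw [hroot] at hx ⊢
  refine Subring.closure_induction ?_ ?_ ?_ ?_ ?_ ?_ hx
  · rintro y (⟨r, rfl⟩ | hy)
    · rw [← map_pow]
      congr 1
      exact FiniteField.pow_card_pow e r
    · rw [← hroot]
      exact hy
  · rw [zero_pow]; positivity
  · rw [one_pow]
  · intro a b _ _ ha hb
    rw [hqe] at ha hb ⊢
    rw [add_pow_char_pow, ha, hb]
  · intro a _ ha
    rw [hqe] at ha ⊢
    rw [neg_pow, neg_one_pow_char_pow, ha, neg_one_mul]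
  · intro a b _ _ ha hb
    rw [mul_pow, ha, hb]

lemma exists_anisotropic (k : ℕ) (hk : k ≠ 0) :
    ∃ N : MvPolynomial (Fin k) F, N.IsHomogeneous k ∧
      ∀ y : Fin k → F, y ≠ 0 → eval y N ≠ 0 := by
  classical
  obtain ⟨K, _, _, _, hrank⟩ := exists_ext (F := F) k hk
  let b : Basis (Fin k) F K := Module.finBasisOfFinrankEq F K hrank
  set M : Matrix (Fin k) (Fin k) (MvPolynomial (Fin k) F) :=
    Matrix.of fun i j => ∑ l, C (Algebra.leftMulMatrix b (b l) i j) * X l with hM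
  refine ⟨M.det, ?_, ?_⟩
  · rw [Matrix.det_apply]
    apply IsHomogeneous.sum
    intro σ _
    have hterm : (∏ i, M (σ i) i).IsHomogeneous k := by
      have hentry : ∀ i j, (M i j).IsHomogeneous 1 := by
        intro i j
        show (∑ l, C (Algebra.leftMulMatrix b (b l) i j) * X l).IsHomogeneous 1
        exact IsHomogeneous.sum _ _ _ fun l _ => (isHomogeneous_X F l).C_mul _
      have := IsHomogeneous.prod Finset.univ (fun i => M (σ i) i) (fun _ => 1)
        (fun i _ => hentry (σ i) i)
      simpa using this
    rcases Int.units_eq_one_or (Equiv.Perm.sign σ) with h | h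
    · rw [h, one_smul]; exact hterm
    · rw [h, Units.smul_def, Units.val_neg, Units.val_one, neg_zsmul, one_zsmul]
      exact hterm.neg
  · intro y hy
    have hmap : (M.map (eval y)) = Algebra.leftMulMatrix b (∑ l, y l • b l) := by
      have hlin : Algebra.leftMulMatrix b (∑ l, y l • b l)
          = ∑ l, y l • Algebra.leftMulMatrix b (b l) := by
        rw [map_sum]
        simp_rw [map_smul]
      ext i j
      rw [Matrix.map_apply, hlin]
      show eval y (∑ l, C (Algebra.leftMulMatrix b (b l) i j) * X l) = _
      rw [Matrix.sum_apply]
      simp only [map_sum, map_mul, eval_C, eval_X, Matrix.smul_apply, smul_eq_mul]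
      exact Finset.sum_congr rfl fun l _ => mul_comm _ _
    have hz : (∑ l, y l • b l) ≠ 0 := by
      intro h0
      apply hy
      have := (Fintype.linearIndependent_iff.1 b.linearIndependent) y h0
      funext l
      exact this l
    have hdet : ((Algebra.leftMulMatrix b) (∑ l, y l • b l)).det ≠ 0 := by
      set z := ∑ l, y l • b l with hzdef
      have hinv : (Algebra.leftMulMatrix b z) * (Algebra.leftMulMatrix b z⁻¹) = 1 := by
        rw [← map_mul, mul_inv_cancel₀ hz, map_one]
      intro hd
      have := Matrix.det_mul (Algebra.leftMulMatrix b z) (Algebra.leftMulMatrix b z⁻¹)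
      rw [hinv, Matrix.det_one, hd, zero_mul] at this
      exact one_ne_zero this
    intro h0
    apply hdet
    rw [← hmap, ← RingHom.mapMatrix_apply, ← RingHom.map_det, h0]

lemma exists_form (m k : ℕ) (hk : k ≠ 0) (hkm : k ≤ m) (W : Submodule F (Fin m → F))
    (hW : finrank F W = m - k) :
    ∃ f : MvPolynomial (Fin m) F, f.IsHomogeneous k ∧
      ∀ v : Fin m → F, v ∉ W → eval v f ≠ 0 := by
  classical
  obtain ⟨N, hN, hNan⟩ := exists_anisotropic (F := F) k hk
  have hpi : finrank F (Fin m → F) = m := by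
    rw [Module.finrank_pi]
    exact Fintype.card_fin m
  have hQ : finrank F ((Fin m → F) ⧸ W) = k := by
    have := Submodule.finrank_quotient_add_finrank W
    rw [hpi, hW] at this
    omega
  let c : Basis (Fin k) F ((Fin m → F) ⧸ W) := Module.finBasisOfFinrankEq F _ hQ
  let ℓ : Fin k → ((Fin m → F) →ₗ[F] F) := fun i =>
    (Finsupp.lapply i).comp ((c.repr : ((Fin m → F) ⧸ W) ≃ₗ[F] (Fin k →₀ F)).toLinearMap.comp W.mkQ)
  set g : Fin k → MvPolynomial (Fin m) F :=
    fun i => ∑ j, C (ℓ i (Pi.single j 1)) * X j with hg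
  have heval : ∀ (i : Fin k) (v : Fin m → F), eval v (g i) = ℓ i v := by
    intro i v
    have hv : (∑ j, v j • (Pi.single j (1:F) : Fin m → F)) = v := by
      ext j'
      rw [Finset.sum_apply]
      simp [Pi.single_apply]
    conv_rhs => rw [← hv]
    rw [map_sum]
    simp only [map_smul, smul_eq_mul, hg, map_sum, map_mul, eval_C, eval_X]
    exact Finset.sum_congr rfl fun j _ => mul_comm _ _
  refine ⟨aeval g N, ?_, ?_⟩
  · have hg1 : ∀ i, (g i).IsHomogeneous 1 :=
      fun i => IsHomogeneous.sum _ _ _ fun j _ => (isHomogeneous_X F j).C_mul _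
    have := hN.aeval g hg1
    rwa [one_mul] at this
  · intro v hv
    rw [my_eval_aeval]
    simp_rw [heval]
    apply hNan
    intro hzero
    apply hv
    have hrep : c.repr (W.mkQ v) = 0 := by
      ext i
      have := congrFun hzero i
      simpa [ℓ] using this
    have : W.mkQ v = 0 := by
      have := c.repr.map_eq_zero_iff.1 hrep
      exact this
    rwa [Submodule.mkQ_apply, Submodule.Quotient.mk_eq_zero] at this

lemma exists_nontrivial_zero (k e : ℕ) (he : e ≠ 0) (hlt : e < k)
    (g : MvPolynomial (Fin k) F) (hg : g.IsHomogeneous e) :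
    ∃ y : Fin k → F, y ≠ 0 ∧ eval y g = 0 := by
  classical
  obtain ⟨p, hchar⟩ := CharP.exists F
  haveI := hchar
  obtain ⟨mm, hpp, hqm⟩ := FiniteField.card F p
  haveI : Fact p.Prime := ⟨hpp⟩
  have hdeg : g.totalDegree < Fintype.card (Fin k) := by
    rw [Fintype.card_fin]
    exact lt_of_le_of_lt hg.totalDegree_le hlt
  have hdvd := char_dvd_card_solutions p hdeg
  have h0 : eval (0 : Fin k → F) g = 0 := by
    have hcc : constantCoeff g = 0 := by
      rw [constantCoeff_eq]
      exact hg.coeff_eq_zero (by rw [map_zero]; exact Ne.symm he)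
    rw [eval_zero, hcc]
  by_contra hcon
  push_neg at hcon
  have hone : Fintype.card {x : Fin k → F // eval x g = 0} = 1 := by
    rw [Fintype.card_eq_one_iff]
    refine ⟨⟨0, h0⟩, ?_⟩
    rintro ⟨y, hy⟩
    refine Subtype.ext ?_
    by_contra hy0
    exact (hcon y hy0) hy
  rw [hone] at hdvd
  exact hpp.one_lt.ne' (Nat.dvd_one.1 hdvd)

lemma sum_split (q n : ℕ) : ∀ e, e ≤ n + 1 →
    ∑ i ∈ range e, q ^ (n - i) + ∑ i ∈ range (n + 1 - e), q ^ i
      = ∑ i ∈ range (n + 1), q ^ i := by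
  intro e
  induction e with
  | zero => simp
  | succ e ih =>
    intro he
    have ih' := ih (by omega)
    have h3 : n + 1 - e = (n - e) + 1 := by omega
    have h4 : n + 1 - (e + 1) = n - e := by omega
    have h2 : ∑ i ∈ range (n + 1 - e), q ^ i
        = ∑ i ∈ range (n + 1 - (e + 1)), q ^ i + q ^ (n - e) := by
      rw [h3, Finset.sum_range_succ, h4]
    rw [Finset.sum_range_succ]
    omega

theorem stmt_15 (F : Type) [Field F] [Fintype F] (n : ℕ)
    (X : Set (Projectivization F (Fin (n + 1) → F))) (hXne : X.Nonempty)
    (d₁ d₂ : ℕ)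
    (hd₁lt : ∑ i ∈ Finset.range (d₁ - 1), (Fintype.card F) ^ (n - i) < Nat.card X)
    (hd₁max : ∀ d' : ℕ,
      ∑ i ∈ Finset.range (d' - 1), (Fintype.card F) ^ (n - i) < Nat.card X → d' ≤ d₁)
    (hd₂le : Nat.card X ≤ ∑ i ∈ Finset.Icc 1 d₂, (Fintype.card F) ^ i)
    (hd₂min : ∀ d' : ℕ,
      Nat.card X ≤ ∑ i ∈ Finset.Icc 1 d', (Fintype.card F) ^ i → d₂ ≤ d') :
    (∃ e ≤ d₂, 0 < e ∧ ∃ f : MvPolynomial (Fin (n + 1)) F,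
      f ≠ 0 ∧ f.IsHomogeneous e ∧
      ∀ (v : Fin (n + 1) → F) (hv : v ≠ 0),
        Projectivization.mk F v hv ∈ X → eval v f ≠ 0) ∧
    (∀ (e : ℕ) (f : MvPolynomial (Fin (n + 1)) F), 0 < e → f ≠ 0 →
      f.IsHomogeneous e →
      (∀ (v : Fin (n + 1) → F) (hv : v ≠ 0),
        Projectivization.mk F v hv ∈ X → eval v f ≠ 0) → d₁ ≤ e) := by
  classical
  have hq : 1 < Fintype.card F := Fintype.one_lt_card
  haveI : Finite (ℙ F (Fin (n + 1) → F)) := projFinite _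
  have hpi : finrank F (Fin (n + 1) → F) = n + 1 := by
    rw [Module.finrank_pi, Fintype.card_fin]
  have hcardP : Nat.card (ℙ F (Fin (n + 1) → F))
      = ∑ i ∈ Finset.range (n + 1), (Fintype.card F) ^ i := by
    rw [card_proj, hpi]
  haveI : Finite ↥X := X.toFinite
  haveI : Nonempty ↥X := hXne.to_subtype
  have hX0 : 0 < Nat.card X := Nat.card_pos
  have hXle : Nat.card X ≤ ∑ i ∈ Finset.range (n + 1), (Fintype.card F) ^ i := by
    rw [← hcardP, Nat.card_coe_set_eq]
    have h := Set.ncard_le_ncard (Set.subset_univ X) Set.finite_univ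
    rwa [Set.ncard_univ] at h
  constructor
  · -- upper bound: existence of a nonvanishing form of degree ≤ d₂
    have hd₂pos : 0 < d₂ := by
      rcases Nat.eq_zero_or_pos d₂ with h | h
      · subst h; rw [Finset.Icc_eq_empty (by omega), Finset.sum_empty] at hd₂le; omega
      · exact h
    set e := min d₂ (n + 1) with he_def
    have he1 : e ≤ d₂ := min_le_left _ _
    have he2 : e ≤ n + 1 := min_le_right _ _
    have he0 : 0 < e := lt_min hd₂pos (by omega)
    have hBBin : Nat.card X < ∑ i ∈ Finset.range (e + 1), (Fintype.card F) ^ i := by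
      rcases le_or_gt d₂ (n + 1) with hcase | hcase
      · have hee : e = d₂ := min_eq_left hcase
        rw [hee]
        refine lt_of_le_of_lt hd₂le (Finset.sum_lt_sum_of_subset (i := 0) ?_ ?_ ?_ ?_ ?_)
        · intro x hx
          simp only [Finset.mem_Icc] at hx
          simp only [Finset.mem_range]
          omega
        · exact (Finset.mem_range).2 (by omega)
        · simp
        · simp
        · intro j _ _
          positivity
      · have hee : e = n + 1 := min_eq_right (by omega)
        rw [hee]
        refine lt_of_le_of_lt hXle (Finset.sum_lt_sum_of_subset (i := n + 1) ?_ ?_ ?_ ?_ ?_)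
        · exact Finset.range_subset_range.2 (by omega)
        · exact (Finset.mem_range).2 (by omega)
        · simp
        · positivity
        · intro j _ _
          positivity
    obtain ⟨W, hWrank, hWmem⟩ := BB (F := F) e (n + 1) (Fin (n + 1) → F) hpi X hBBin
    obtain ⟨f, hfhom, hfnv⟩ := exists_form (F := F) (n + 1) e he0.ne' he2 W hWrank
    have hWproper : W ≠ ⊤ := by
      intro htop
      rw [htop, finrank_top] at hWrank
      rw [hpi] at hWrank
      omega
    obtain ⟨v₀, hv₀⟩ : ∃ v, v ∉ W := by
      by_contra h
      push_neg at h
      exact hWproper (Submodule.eq_top_iff'.2 h)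
    refine ⟨e, he1, he0, f, ?_, hfhom, ?_⟩
    · intro hf0
      exact hfnv v₀ hv₀ (by rw [hf0, map_zero])
    · intro v hv hmem
      exact hfnv v (hWmem v hv hmem)
  · -- lower bound
    intro e f he0 hf0 hfhom hfnv
    by_contra hcon
    push_neg at hcon
    have hkey : Nat.card X ≤ ∑ i ∈ Finset.range e, (Fintype.card F) ^ (n - i) := by
      rcases le_or_gt (n + 1) e with hcase | hcase
      · have h1 : ∑ i ∈ Finset.range (n + 1), (Fintype.card F) ^ (n - i)
            = ∑ i ∈ Finset.range (n + 1), (Fintype.card F) ^ i := by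
          have h := sum_split (Fintype.card F) n (n + 1) le_rfl
          simpa using h
        refine le_trans (le_trans hXle h1.symm.le) ?_
        refine Finset.sum_le_sum_of_subset (Finset.range_subset_range.2 hcase)
      · by_contra hbig
        push_neg at hbig
        set Z : Set (ℙ F (Fin (n + 1) → F)) :=
          {x | ∃ (v : Fin (n + 1) → F) (hv : v ≠ 0),
            eval v f = 0 ∧ x = Projectivization.mk F v hv} with hZ
        have hdisj : Disjoint X Z := by
          rw [Set.disjoint_left]
          rintro x hxX ⟨v, hv, hev, rfl⟩
          exact hfnv v hv hxX hev
        have hsum : Nat.card X + Nat.card Z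
            ≤ ∑ i ∈ Finset.range (n + 1), (Fintype.card F) ^ i := by
          rw [← hcardP, Nat.card_coe_set_eq, Nat.card_coe_set_eq,
            ← Set.ncard_union_eq hdisj X.toFinite Z.toFinite]
          have h := Set.ncard_le_ncard (Set.subset_univ (X ∪ Z)) Set.finite_univ
          rwa [Set.ncard_univ] at h
        have hZlt : Nat.card Z < ∑ i ∈ Finset.range ((n - e) + 1), (Fintype.card F) ^ i := by
          have hsplit := sum_split (Fintype.card F) n e (by omega)
          have hne : n + 1 - e = (n - e) + 1 := by omega
          rw [hne] at hsplit
          omega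
        obtain ⟨W, hWrank, hWmem⟩ := BB (F := F) (n - e) (n + 1) (Fin (n + 1) → F) hpi Z hZlt
        have hWrank' : finrank F W = e + 1 := by rw [hWrank]; omega
        let w : Basis (Fin (e + 1)) F W := Module.finBasisOfFinrankEq F _ hWrank'
        set gsub : Fin (n + 1) → MvPolynomial (Fin (e + 1)) F :=
          fun i => ∑ j, C ((w j : Fin (n + 1) → F) i) * MvPolynomial.X j with hgsub
        have hghom : (aeval gsub f).IsHomogeneous e := by
          have hg1 : ∀ i, (gsub i).IsHomogeneous 1 :=
            fun i => IsHomogeneous.sum _ _ _ fun j _ => (isHomogeneous_X F j).C_mul _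
          have h := hfhom.aeval gsub hg1
          rwa [one_mul] at h
        obtain ⟨y, hy0, hyz⟩ := exists_nontrivial_zero (e + 1) e he0.ne' (by omega) _ hghom
        set vW : W := ∑ j, y j • w j with hvWdef
        have hcoe : (vW : Fin (n + 1) → F) = ∑ j, y j • (w j : Fin (n + 1) → F) := by
          rw [hvWdef]
          rw [show ((∑ j, y j • w j : W) : Fin (n + 1) → F) = W.subtype (∑ j, y j • w j) from rfl,
            map_sum]
          simp_rw [map_smul]
          rfl
        have hvW0 : vW ≠ 0 := by
          intro h0
          apply hy0
          rw [hvWdef] at h0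
          have h := (Fintype.linearIndependent_iff.1 w.linearIndependent) y h0
          funext j
          exact h j
        have hv0 : (vW : Fin (n + 1) → F) ≠ 0 := by
          simpa [Submodule.coe_eq_zero] using hvW0
        have harg : ((vW : Fin (n + 1) → F)) = fun i => eval y (gsub i) := by
          funext i
          rw [hcoe, Finset.sum_apply]
          simp only [hgsub, map_sum, map_mul, eval_C, eval_X, Pi.smul_apply, smul_eq_mul]
          exact Finset.sum_congr rfl fun j _ => mul_comm _ _
        have hveval : eval (vW : Fin (n + 1) → F) f = eval y (aeval gsub f) := by
          rw [my_eval_aeval, harg]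
        have hmemZ : Projectivization.mk F (vW : Fin (n + 1) → F) hv0 ∈ Z :=
          ⟨_, hv0, by rw [hveval]; exact hyz, rfl⟩
        exact hWmem _ hv0 hmemZ vW.2
    have hmono : ∑ i ∈ Finset.range e, (Fintype.card F) ^ (n - i)
        ≤ ∑ i ∈ Finset.range (d₁ - 1), (Fintype.card F) ^ (n - i) :=
      Finset.sum_le_sum_of_subset (Finset.range_subset_range.2 (by omega))
    omega
end
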